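/- arXiv:1308.6498 — 2 statements merged into one kernel-verified Lean document; each statement's English description precedes it below -/
import Mathlib

section
/- Let c₁, …, c_N be pairwise distinct positive reals and I ⊆ ℝ a nonempty open interval. Then there exist b₁, …, b_N ∈ I such that the N×N matrix H with entries H_{j,i} = exp(-b_i·c_j) is invertible. -/
/-- For pairwise distinct positive reals `c j` and a nonempty open interval
`(l, u)`, there exist `b 1, …, b N` in the interval such that the matrix with
entries `exp (-(b i) * c j)` is invertible. -/
theorem exists_b_exp_matrix_invertible (N : ℕ) (c : Fin N → ℝ)
    (hc : Function.Injective c) (hcpos : ∀ j, 0 < c j)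
    (l u : ℝ) (hlu : l < u) :
    ∃ b : Fin N → ℝ, (∀ i, b i ∈ Set.Ioo l u) ∧
      IsUnit (Matrix.of fun j i : Fin N => Real.exp (-(b i) * c j)).det := by
  set t : ℝ := (u - l) / (2 * (N + 1)) with ht
  have hNpos : (0:ℝ) < 2 * (N + 1) := by positivity
  have ht0 : 0 < t := by
    apply div_pos (by linarith) hNpos
  refine ⟨fun i => l + t * ((i : ℕ) + 1), ?_, ?_⟩
  · intro i
    have hi : ((i : ℕ) : ℝ) + 1 ≤ (N : ℝ) := by
      have := i.isLt
      exact_mod_cast this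
    constructor
    · show l < l + t * ((i : ℕ) + 1)
      nlinarith
    · show l + t * ((i : ℕ) + 1) < u
      have h1 : t * ((i : ℕ) + 1) ≤ t * N := by nlinarith
      have h2 : t * N < u - l := by
        rw [ht, div_mul_eq_mul_div, div_lt_iff₀ hNpos]
        nlinarith
      linarith
  · have key : ∀ (j i : Fin N), Real.exp (-(l + t * ((i : ℕ) + 1)) * c j)
        = Real.exp (-(l + t) * c j) * Real.exp (-t * c j) ^ (i : ℕ) := by
      intro j i
      rw [← Real.exp_nat_mul, ← Real.exp_add]
      congr 1
      ring
    have hM : (Matrix.of fun j i : Fin N =>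
          Real.exp (-(l + t * ((i : ℕ) + 1)) * c j))
        = Matrix.diagonal (fun j => Real.exp (-(l + t) * c j))
          * Matrix.vandermonde (fun j => Real.exp (-t * c j)) := by
      ext j i
      simp only [Matrix.of_apply, Matrix.diagonal_mul, Matrix.vandermonde_apply]
      exact key j i
    rw [hM, Matrix.det_mul, Matrix.det_diagonal, isUnit_iff_ne_zero]
    apply mul_ne_zero
    · exact Finset.prod_ne_zero_iff.2 fun j _ => Real.exp_ne_zero _
    · rw [Matrix.det_vandermonde_ne_zero_iff]
      intro a b hab
      apply hc
      have := Real.exp_injective hab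
      have hne : -t ≠ 0 := by linarith
      field_simp at this
      linarith
end

section
/- Let c₁,…,c_N be pairwise distinct positive reals, N ≥ 1. Suppose w ∈ ℝᴺ with w_N ≠ 0 satisfies (-c_N)^s · exp(-b·c_N) = -Σ_{j=1}^{N-1} (w_j/w_N)·(-c_j)^s · exp(-b·c_j) for all natural numbers s ≥ 1 and all b in some nonempty open interval I. Then a contradiction follows; i.e., no such w exists. -/
/-- No nonzero last coefficient can satisfy the infinite family of derivative
identities: for pairwise distinct positive reals `c j`, if
`(-c_N)^s exp (-b c_N) = -∑_{j<N} (w j / w_N) (-c j)^s exp (-b c j)` holds for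
all `s ≥ 1` and all `b` in a nonempty open interval, we get a contradiction. -/
theorem no_such_w_exists (N : ℕ) (c : Fin (N + 1) → ℝ)
    (hc : Function.Injective c) (hcpos : ∀ j, 0 < c j)
    (w : Fin (N + 1) → ℝ) (hw : w (Fin.last N) ≠ 0)
    (l u : ℝ) (hlu : l < u)
    (h : ∀ s : ℕ, 1 ≤ s → ∀ b ∈ Set.Ioo l u,
      (-(c (Fin.last N))) ^ s * Real.exp (-b * c (Fin.last N))
        = -∑ j : Fin N, (w j.castSucc / w (Fin.last N)) *
            ((-(c j.castSucc)) ^ s * Real.exp (-b * c j.castSucc))) :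
    False := by
  set b : ℝ := (l + u) / 2 with hb
  have hbmem : b ∈ Set.Ioo l u := ⟨by linarith, by linarith⟩
  set x : Fin (N + 1) → ℝ := fun j => -(c j) with hx
  have hxinj : Function.Injective x := fun i j hij => hc (by
    have := hij; simp only [hx, neg_inj] at this; exact this)
  -- vector v j = (w j / w_N) * exp(-b c j) * x j
  set v : Fin (N + 1) → ℝ :=
    fun j => (w j / w (Fin.last N)) * Real.exp (-b * c j) * x j with hv
  -- the Vandermonde-transpose matrix
  set M : Matrix (Fin (N + 1)) (Fin (N + 1)) ℝ := fun i j => x j ^ (i : ℕ) with hM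
  have hsum : ∀ s : ℕ, 1 ≤ s →
      ∑ j : Fin (N + 1), (w j / w (Fin.last N)) * Real.exp (-b * c j) * x j ^ s = 0 := by
    intro s hs
    rw [Fin.sum_univ_castSucc]
    have := h s hs b hbmem
    have hlast : (w (Fin.last N) / w (Fin.last N)) = 1 := div_self hw
    rw [hlast, one_mul]
    have : ∑ j : Fin N, (w j.castSucc / w (Fin.last N)) * Real.exp (-b * c j.castSucc)
        * x j.castSucc ^ s
        = ∑ j : Fin N, (w j.castSucc / w (Fin.last N)) *
            ((-(c j.castSucc)) ^ s * Real.exp (-b * c j.castSucc)) := by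
      apply Finset.sum_congr rfl
      intro j _
      simp only [hx]; ring
    rw [this]
    rw [show Real.exp (-b * c (Fin.last N)) * x (Fin.last N) ^ s
        = (-(c (Fin.last N))) ^ s * Real.exp (-b * c (Fin.last N)) from by
      simp only [hx]; ring]
    rw [h s hs b hbmem]; ring
  have hmv : M.mulVec v = 0 := by
    funext i
    simp only [Matrix.mulVec, dotProduct, hM, hv, Pi.zero_apply]
    have := hsum (i + 1) (Nat.le_add_left 1 i)
    rw [← this]
    apply Finset.sum_congr rfl
    intro j _
    ring
  have hdet : M.det ≠ 0 := by
    have : M = Matrix.transpose (Matrix.vandermonde x) := by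
      funext i j; simp [hM, Matrix.vandermonde, Matrix.transpose_apply]
    rw [this, Matrix.det_transpose]
    exact Matrix.det_vandermonde_ne_zero_iff.mpr hxinj
  have hv0 : v = 0 := Matrix.eq_zero_of_mulVec_eq_zero hdet hmv
  have : v (Fin.last N) = 0 := by rw [hv0]; rfl
  simp only [hv, div_self hw, one_mul, hx] at this
  rcases mul_eq_zero.mp this with h1 | h2
  · exact (Real.exp_pos _).ne' h1
  · exact (neg_ne_zero.mpr (hcpos (Fin.last N)).ne') h2
end
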